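/- For the sampled Gaussian mechanism with sampling rate q ∈ [0,1] and noise σ > 0, and integer α ≥ 2, the quantity A_α(q,σ) = E_{z∼ν₀}[((1−q)ν₀(z) + qν₁(z))/ν₀(z))^α], where ν₀ = N(0,σ²) and ν₁ = N(1,σ²), equals the binomial expansion ∑_{k=0}^{α} C(α,k)(1−q)^{α−k} q^k exp((k² − k)/(2σ²)). -/

import Mathlib

open Real

/-- Density of `N(0, σ²)`. -/
noncomputable def nu0 (σ z : ℝ) : ℝ :=
  (Real.sqrt (2 * π * σ ^ 2))⁻¹ * Real.exp (-z ^ 2 / (2 * σ ^ 2))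

/-- Density of `N(1, σ²)`. -/
noncomputable def nu1 (σ z : ℝ) : ℝ :=
  (Real.sqrt (2 * π * σ ^ 2))⁻¹ * Real.exp (-(z - 1) ^ 2 / (2 * σ ^ 2))

lemma nu0_pos (σ z : ℝ) (hσ : 0 < σ) : 0 < nu0 σ z := by
  unfold nu0
  positivity

lemma key_pointwise (q σ : ℝ) (hσ : 0 < σ) (α : ℕ) (z : ℝ) :
    (((1 - q) * nu0 σ z + q * nu1 σ z) / nu0 σ z) ^ α * nu0 σ z =
      ∑ k ∈ Finset.range (α + 1),
        (α.choose k : ℝ) * (1 - q) ^ (α - k) * q ^ k *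
          Real.exp (((k : ℝ) ^ 2 - k) / (2 * σ ^ 2)) *
            ProbabilityTheory.gaussianPDFReal (k : ℝ) ⟨σ ^ 2, sq_nonneg σ⟩ z := by
  have h0 : 0 < nu0 σ z := nu0_pos σ z hσ
  have hr : nu1 σ z / nu0 σ z = Real.exp ((2 * z - 1) / (2 * σ ^ 2)) := by
    unfold nu0 nu1
    have hc : (0:ℝ) < (Real.sqrt (2 * π * σ ^ 2))⁻¹ := by positivity
    rw [mul_div_mul_left _ _ (ne_of_gt hc), ← Real.exp_sub]
    congr 1
    field_simp
    ring
  have hsplit : ((1 - q) * nu0 σ z + q * nu1 σ z) / nu0 σ z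
      = q * (nu1 σ z / nu0 σ z) + (1 - q) := by
    field_simp
    ring
  rw [hsplit, hr, add_pow, Finset.sum_mul]
  refine Finset.sum_congr rfl fun k hk => ?_
  have hterm : (Real.exp ((2 * z - 1) / (2 * σ ^ 2))) ^ k * nu0 σ z =
      Real.exp (((k : ℝ) ^ 2 - k) / (2 * σ ^ 2)) *
        ProbabilityTheory.gaussianPDFReal (k : ℝ) ⟨σ ^ 2, sq_nonneg σ⟩ z := by
    unfold nu0 ProbabilityTheory.gaussianPDFReal
    rw [← Real.exp_nat_mul]
    push_cast
    have he : Real.exp ((k:ℝ) * ((2 * z - 1) / (2 * σ ^ 2))) * Real.exp (-z ^ 2 / (2 * σ ^ 2))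
        = Real.exp (((k : ℝ) ^ 2 - (k:ℝ)) / (2 * σ ^ 2)) *
          Real.exp (-(z - (k:ℝ)) ^ 2 / (2 * σ ^ 2)) := by
      rw [← Real.exp_add, ← Real.exp_add]
      congr 1
      field_simp
      ring
    erw [NNReal.coe_mk]
    linear_combination (Real.sqrt (2 * π * σ ^ 2))⁻¹ * he
  rw [mul_pow]
  calc (q ^ k * Real.exp ((2 * z - 1) / (2 * σ ^ 2)) ^ k * (1 - q) ^ (α - k) *
        (α.choose k : ℝ)) * nu0 σ z
      = q ^ k * (1 - q) ^ (α - k) * (α.choose k : ℝ) *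
        (Real.exp ((2 * z - 1) / (2 * σ ^ 2)) ^ k * nu0 σ z) := by ring
    _ = _ := by rw [hterm]; ring

theorem sampled_gaussian_A_alpha (q σ : ℝ) (hq0 : 0 ≤ q) (hq1 : q ≤ 1)
    (hσ : 0 < σ) (α : ℕ) (hα : 2 ≤ α) :
    (∫ z : ℝ, (((1 - q) * nu0 σ z + q * nu1 σ z) / nu0 σ z) ^ α * nu0 σ z) =
      ∑ k ∈ Finset.range (α + 1),
        (α.choose k : ℝ) * (1 - q) ^ (α - k) * q ^ k *
          Real.exp (((k : ℝ) ^ 2 - k) / (2 * σ ^ 2)) := by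
  have hv : (⟨σ ^ 2, sq_nonneg σ⟩ : NNReal) ≠ 0 := by
    intro h
    have := congrArg (NNReal.toReal) h
    have this : σ = 0 := (pow_eq_zero_iff two_ne_zero).mp (show σ ^ 2 = 0 from this)
    exact absurd this (ne_of_gt hσ)
  calc (∫ z : ℝ, (((1 - q) * nu0 σ z + q * nu1 σ z) / nu0 σ z) ^ α * nu0 σ z)
      = ∫ z : ℝ, ∑ k ∈ Finset.range (α + 1),
        (α.choose k : ℝ) * (1 - q) ^ (α - k) * q ^ k *
          Real.exp (((k : ℝ) ^ 2 - k) / (2 * σ ^ 2)) *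
            ProbabilityTheory.gaussianPDFReal (k : ℝ) ⟨σ ^ 2, sq_nonneg σ⟩ z := by
        exact MeasureTheory.integral_congr_ae (Filter.Eventually.of_forall
          fun z => key_pointwise q σ hσ α z)
    _ = ∑ k ∈ Finset.range (α + 1), ∫ z : ℝ,
        (α.choose k : ℝ) * (1 - q) ^ (α - k) * q ^ k *
          Real.exp (((k : ℝ) ^ 2 - k) / (2 * σ ^ 2)) *
            ProbabilityTheory.gaussianPDFReal (k : ℝ) ⟨σ ^ 2, sq_nonneg σ⟩ z := by
        apply MeasureTheory.integral_finset_sum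
        intro k _
        exact (ProbabilityTheory.integrable_gaussianPDFReal _ _).const_mul _
    _ = ∑ k ∈ Finset.range (α + 1),
        (α.choose k : ℝ) * (1 - q) ^ (α - k) * q ^ k *
          Real.exp (((k : ℝ) ^ 2 - k) / (2 * σ ^ 2)) := by
        refine Finset.sum_congr rfl fun k _ => ?_
        rw [MeasureTheory.integral_const_mul,
          ProbabilityTheory.integral_gaussianPDFReal_eq_one _ hv, mul_one]
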